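/- (Corollary 1: exactness of the bound under optimal transitions) With the setup of Proposition 1, let f_T(z_T) = p(z_T|x) be the true posterior of a model p(x, z_T) with p(x) > 0, and q_0 = f_0. If for each t the transitions satisfy f_{t−1}(z_{t−1}) q_t(z_t|z_{t−1}) = f_t(z_t) r_t(z_{t−1}|z_t), then the auxiliary variational lower bound E_{q(z_0,…,z_T)}[ log( p(x,z_T) ∏_{t=1}^T r_t(z_{t−1}|z_t) / (q_0(z_0) ∏_{t=1}^T q_t(z_t|z_{t−1})) ) ] equals log p(x) exactly. -/

import Mathlib

open MeasureTheory Real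

private lemma chain_integral {Ω : Type*} [MeasurableSpace Ω] (μ : Measure Ω) [SigmaFinite μ]
    (g : Ω → ℝ) (q : ℕ → Ω → Ω → ℝ) (hg : ∫ z, g z ∂μ = 1) :
    ∀ n : ℕ, (∀ t, 1 ≤ t → t ≤ n → ∀ a, ∫ b, q t a b ∂μ = 1) →
    Integrable (fun z : Fin (n+1) → Ω =>
        g (z 0) * ∏ i : Fin n, q ((i : ℕ) + 1) (z i.castSucc) (z i.succ))
      (Measure.pi fun _ => μ) →
    ∫ z : Fin (n+1) → Ω, g (z 0) * ∏ i : Fin n, q ((i : ℕ) + 1) (z i.castSucc) (z i.succ)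
      ∂(Measure.pi fun _ => μ) = 1 := by
  intro n
  induction n with
  | zero =>
    intro _ _
    have h := (measurePreserving_funUnique μ (Fin 1)).integral_comp'
      (f := MeasurableEquiv.funUnique (Fin 1) Ω) g
    simp only [Finset.univ_eq_empty, Finset.prod_empty, mul_one]
    exact h.trans hg
  | succ n IH =>
    intro hq hint
    have hq' : ∀ t, 1 ≤ t → t ≤ n → ∀ a, ∫ b, q t a b ∂μ = 1 :=
      fun t h1 h2 => hq t h1 (h2.trans (Nat.le_succ n))
    set e := MeasurableEquiv.piFinSuccAbove (fun _ : Fin (n+2) => Ω) (Fin.last (n+1)) with he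
    have MP := measurePreserving_piFinSuccAbove (fun _ : Fin (n+2) => μ) (Fin.last (n+1))
    have hsymm : ∀ (b : Ω) (w : Fin (n+1) → Ω),
        g (e.symm (b, w) 0) * ∏ i : Fin (n+1),
            q ((i : ℕ) + 1) (e.symm (b, w) i.castSucc) (e.symm (b, w) i.succ)
        = (g (w 0) * ∏ i : Fin n, q ((i : ℕ) + 1) (w i.castSucc) (w i.succ))
            * q (n + 1) (w (Fin.last n)) b := by
      intro b w
      have hsnoc : e.symm (b, w) = Fin.snoc w b := by
        ext j
        simp [he, MeasurableEquiv.piFinSuccAbove, Fin.insertNthEquiv, Fin.insertNth_last']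
      rw [hsnoc, Fin.prod_univ_castSucc]
      simp [Fin.snoc_castSucc, Fin.snoc_last, Fin.succ_castSucc, -Fin.castSucc_succ]
      ring
    have hIF : Integrable (fun p : Ω × (Fin (n+1) → Ω) =>
        (g (p.2 0) * ∏ i : Fin n, q ((i : ℕ) + 1) (p.2 i.castSucc) (p.2 i.succ))
          * q (n+1) (p.2 (Fin.last n)) p.1)
        (μ.prod (Measure.pi fun _ : Fin (n+1) => μ)) := by
      have h2 := ((MP.symm e).integrable_comp_emb e.symm.measurableEmbedding
        (g := fun z : Fin (n+2) → Ω =>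
          g (z 0) * ∏ i : Fin (n+1), q ((i : ℕ) + 1) (z i.castSucc) (z i.succ))).2 hint
      refine h2.congr (Filter.Eventually.of_forall fun p => ?_)
      simpa [Function.comp] using hsymm p.1 p.2
    have hDn : Integrable (fun w : Fin (n+1) → Ω =>
        g (w 0) * ∏ i : Fin n, q ((i : ℕ) + 1) (w i.castSucc) (w i.succ))
        (Measure.pi fun _ : Fin (n+1) => μ) := by
      have := hIF.integral_prod_right
      refine this.congr (Filter.Eventually.of_forall fun w => ?_)
      dsimp only
      rw [integral_const_mul, hq (n+1) (Nat.le_add_left 1 n) le_rfl, mul_one]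
    have step1 : ∫ z : Fin (n+2) → Ω,
        g (z 0) * ∏ i : Fin (n+1), q ((i : ℕ) + 1) (z i.castSucc) (z i.succ)
        ∂(Measure.pi fun _ => μ)
        = ∫ p : Ω × (Fin (n+1) → Ω),
            (g (p.2 0) * ∏ i : Fin n, q ((i : ℕ) + 1) (p.2 i.castSucc) (p.2 i.succ))
              * q (n+1) (p.2 (Fin.last n)) p.1
            ∂(μ.prod (Measure.pi fun _ : Fin (n+1) => μ)) := by
      rw [← (MP.symm e).integral_comp' (fun z : Fin (n+2) → Ω =>
          g (z 0) * ∏ i : Fin (n+1), q ((i : ℕ) + 1) (z i.castSucc) (z i.succ))]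
      exact integral_congr_ae (Filter.Eventually.of_forall fun p => hsymm p.1 p.2)
    rw [step1, integral_prod_symm _ hIF]
    have : ∀ w : Fin (n+1) → Ω,
        (∫ b, (g (w 0) * ∏ i : Fin n, q ((i : ℕ) + 1) (w i.castSucc) (w i.succ))
          * q (n+1) (w (Fin.last n)) b ∂μ)
        = g (w 0) * ∏ i : Fin n, q ((i : ℕ) + 1) (w i.castSucc) (w i.succ) := by
      intro w
      rw [integral_const_mul, hq (n+1) (Nat.le_add_left 1 n) le_rfl, mul_one]
    rw [integral_congr_ae (Filter.Eventually.of_forall this)]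
    exact IH hq' hDn

private lemma telescope_const {Ω : Type*} [MeasurableSpace Ω] (μ : Measure Ω) [SigmaFinite μ]
    (T : ℕ) (f : ℕ → Ω → ℝ) (q r : ℕ → Ω → Ω → ℝ) (pJ : Ω → ℝ)
    (hpJ_pos : ∀ z, 0 < pJ z)
    (hpx_pos : 0 < ∫ z, pJ z ∂μ)
    (hposterior : ∀ z, f T z = pJ z / (∫ z', pJ z' ∂μ))
    (hf_pos : ∀ t, ∀ z, 0 < f t z)
    (hr_pos : ∀ t b a, 0 < r t b a)
    (hbalance : ∀ t, 1 ≤ t → t ≤ T → ∀ a b, f (t - 1) a * q t a b = f t b * r t b a)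
    (z : Fin (T + 1) → Ω) :
    (pJ (z (Fin.last T)) * ∏ i : Fin T, r ((i : ℕ) + 1) (z i.succ) (z i.castSucc)) /
      (f 0 (z 0) * ∏ i : Fin T, q ((i : ℕ) + 1) (z i.castSucc) (z i.succ))
    = ∫ z, pJ z ∂μ := by
  set I := ∫ z, pJ z ∂μ with hI
  set A := ∏ i : Fin T, q ((i : ℕ) + 1) (z i.castSucc) (z i.succ) with hA
  set B := ∏ i : Fin T, r ((i : ℕ) + 1) (z i.succ) (z i.castSucc) with hB
  set P := ∏ i : Fin T, f (i : ℕ) (z i.castSucc) with hP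
  set S := ∏ i : Fin T, f ((i : ℕ) + 1) (z i.succ) with hS
  have h1 : ∀ i : Fin T,
      f (i : ℕ) (z i.castSucc) * q ((i : ℕ) + 1) (z i.castSucc) (z i.succ)
      = f ((i : ℕ) + 1) (z i.succ) * r ((i : ℕ) + 1) (z i.succ) (z i.castSucc) := by
    intro i
    have := hbalance ((i : ℕ) + 1) (Nat.le_add_left 1 i) (by omega) (z i.castSucc) (z i.succ)
    simpa using this
  have h2 : P * A = S * B := by
    rw [hP, hA, hS, hB, ← Finset.prod_mul_distrib, ← Finset.prod_mul_distrib]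
    exact Finset.prod_congr rfl fun i _ => h1 i
  have h3 : P * f T (z (Fin.last T)) = f 0 (z 0) * S := by
    have hc := Fin.prod_univ_castSucc (fun j : Fin (T+1) => f (j : ℕ) (z j))
    have hs := Fin.prod_univ_succ (fun j : Fin (T+1) => f (j : ℕ) (z j))
    simp only [Fin.coe_castSucc, Fin.val_succ, Fin.val_last, Fin.val_zero] at hc hs
    rw [hP, hS]
    rw [← hc, hs]
  have hPpos : 0 < P := Finset.prod_pos fun i _ => hf_pos _ _
  have hBpos : 0 < B := Finset.prod_pos fun i _ => hr_pos _ _ _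
  have hfT : 0 < f T (z (Fin.last T)) := hf_pos _ _
  have key : f 0 (z 0) * A = f T (z (Fin.last T)) * B := by
    have hcalc : f 0 (z 0) * A * (P * f T (z (Fin.last T)))
        = f T (z (Fin.last T)) * B * (P * f T (z (Fin.last T))) := by
      calc f 0 (z 0) * A * (P * f T (z (Fin.last T)))
          = f 0 (z 0) * f T (z (Fin.last T)) * (P * A) := by ring
        _ = f 0 (z 0) * f T (z (Fin.last T)) * (S * B) := by rw [h2]
        _ = (f 0 (z 0) * S) * (f T (z (Fin.last T)) * B) := by ring
        _ = (P * f T (z (Fin.last T))) * (f T (z (Fin.last T)) * B) := by rw [← h3]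
        _ = f T (z (Fin.last T)) * B * (P * f T (z (Fin.last T))) := by ring
    exact mul_right_cancel₀ (by positivity) hcalc
  rw [key, hposterior]
  have hz := hpJ_pos (z (Fin.last T))
  have hden : (0:ℝ) < pJ (z (Fin.last T)) / I * B := by positivity
  rw [div_eq_iff (ne_of_gt hden)]
  field_simp

/-- Corollary 1 (exactness of the bound under optimal transitions): if `f_T` is the true
posterior `p(z_T|x) = p(x,z_T)/p(x)`, `q_0 = f_0`, and each pair of transitions satisfies
the balance condition `f_{t−1}(a) q_t(b|a) = f_t(b) r_t(a|b)`, then the auxiliary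
variational lower bound
`E_{q(z_0,…,z_T)}[log( p(x,z_T) ∏ r_t(z_{t−1}|z_t) / (q_0(z_0) ∏ q_t(z_t|z_{t−1})) )]`
equals `log p(x)` exactly. -/
theorem avo_bound_exact
    {Ω : Type*} [MeasurableSpace Ω] (μ : Measure Ω) [SigmaFinite μ]
    (T : ℕ) (f : ℕ → Ω → ℝ) (q r : ℕ → Ω → Ω → ℝ) (pJ : Ω → ℝ)
    -- `pJ z = p(x, z_T)` for the fixed observation `x`; f T is the true posterior:
    (hpJ_pos : ∀ z, 0 < pJ z) (hpJ_int : Integrable pJ μ)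
    (hpx_pos : 0 < ∫ z, pJ z ∂μ)
    (hposterior : ∀ z, f T z = pJ z / (∫ z', pJ z' ∂μ))
    (hf_pos : ∀ t, ∀ z, 0 < f t z)
    (hf_prob : ∀ t ≤ T, ∫ z, f t z ∂μ = 1)
    (hq_pos : ∀ t a b, 0 < q t a b) (hr_pos : ∀ t b a, 0 < r t b a)
    (hq_cond : ∀ t, 1 ≤ t → t ≤ T → ∀ a, ∫ b, q t a b ∂μ = 1)
    (hr_cond : ∀ t, 1 ≤ t → t ≤ T → ∀ b, ∫ a, r t b a ∂μ = 1)
    (hbalance : ∀ t, 1 ≤ t → t ≤ T → ∀ a b, f (t - 1) a * q t a b = f t b * r t b a)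
    (hint : Integrable
      (fun z : Fin (T + 1) → Ω =>
        (f 0 (z 0) * ∏ i : Fin T, q ((i : ℕ) + 1) (z i.castSucc) (z i.succ)) *
          Real.log
            ((pJ (z (Fin.last T)) *
                ∏ i : Fin T, r ((i : ℕ) + 1) (z i.succ) (z i.castSucc)) /
              (f 0 (z 0) * ∏ i : Fin T, q ((i : ℕ) + 1) (z i.castSucc) (z i.succ))))
      (Measure.pi fun _ : Fin (T + 1) => μ)) :
    ∫ z : Fin (T + 1) → Ω,
        (f 0 (z 0) * ∏ i : Fin T, q ((i : ℕ) + 1) (z i.castSucc) (z i.succ)) *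
          Real.log
            ((pJ (z (Fin.last T)) *
                ∏ i : Fin T, r ((i : ℕ) + 1) (z i.succ) (z i.castSucc)) /
              (f 0 (z 0) * ∏ i : Fin T, q ((i : ℕ) + 1) (z i.castSucc) (z i.succ)))
        ∂(Measure.pi fun _ : Fin (T + 1) => μ)
      = Real.log (∫ z, pJ z ∂μ) := by
  have hconst := telescope_const μ T f q r pJ hpJ_pos hpx_pos hposterior hf_pos hr_pos hbalance
  have heq : (fun z : Fin (T + 1) → Ω =>
        (f 0 (z 0) * ∏ i : Fin T, q ((i : ℕ) + 1) (z i.castSucc) (z i.succ)) *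
          Real.log
            ((pJ (z (Fin.last T)) *
                ∏ i : Fin T, r ((i : ℕ) + 1) (z i.succ) (z i.castSucc)) /
              (f 0 (z 0) * ∏ i : Fin T, q ((i : ℕ) + 1) (z i.castSucc) (z i.succ))))
      = fun z : Fin (T + 1) → Ω =>
        (f 0 (z 0) * ∏ i : Fin T, q ((i : ℕ) + 1) (z i.castSucc) (z i.succ)) *
          Real.log (∫ z, pJ z ∂μ) :=
    funext fun z => by rw [hconst z]
  rw [heq]
  rw [heq] at hint
  rw [integral_mul_const]
  by_cases hlog : Real.log (∫ z, pJ z ∂μ) = 0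
  · simp [hlog]
  · have hDint : Integrable (fun z : Fin (T + 1) → Ω =>
        f 0 (z 0) * ∏ i : Fin T, q ((i : ℕ) + 1) (z i.castSucc) (z i.succ))
        (Measure.pi fun _ : Fin (T + 1) => μ) := by
      have h2 := hint.mul_const (Real.log (∫ z, pJ z ∂μ))⁻¹
      refine h2.congr (Filter.Eventually.of_forall fun z => ?_)
      field_simp
    rw [chain_integral μ (f 0) q (hf_prob 0 (Nat.zero_le T)) T hq_cond hDint, one_mul]
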